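/- Let m ≥ 1 and let I be an ideal of R with dim_ℂ(R/I) = m. Then x^m ∈ I and y^m ∈ I. -/

import Mathlib

noncomputable section

open MvPolynomial

/-- The polynomial ring `ℂ[x,y]`. -/
abbrev Pc : Type := MvPolynomial (Fin 2) ℂ

/-- The ideal `(xy)` of `ℂ[x,y]`. -/
def nodeIdeal : Ideal Pc := Ideal.span {X 0 * X 1}

/-- The affine coordinate ring `ℂ[x,y]/(xy)` of the node. -/
abbrev Anode : Type := Pc ⧸ nodeIdeal

instance : CommRing Anode := Ideal.Quotient.commRing _

/-- The class of `x` in `ℂ[x,y]/(xy)`. -/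
def xA : Anode := Ideal.Quotient.mk nodeIdeal (X 0)

/-- The class of `y` in `ℂ[x,y]/(xy)`. -/
def yA : Anode := Ideal.Quotient.mk nodeIdeal (X 1)

/-- The maximal ideal `(x,y)` of `ℂ[x,y]/(xy)`. -/
def mA : Ideal Anode := Ideal.span {xA, yA}

/-- Evaluation of polynomials at the origin. -/
def evalO : Pc →+* ℂ := (aeval (fun _ => (0:ℂ)) : Pc →ₐ[ℂ] ℂ).toRingHom

lemma node_le_ker : nodeIdeal ≤ RingHom.ker evalO := by
  rw [nodeIdeal, Ideal.span_le, Set.singleton_subset_iff]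
  simp [evalO, RingHom.mem_ker]

/-- Evaluation at the origin, descended to `ℂ[x,y]/(xy)`. -/
def εA : Anode →+* ℂ := Ideal.Quotient.lift nodeIdeal evalO node_le_ker

lemma sub_const_mem (p : Pc) :
    p - C (constantCoeff p) ∈ (Ideal.span {(X 0 : Pc), X 1}) := by
  induction p using MvPolynomial.induction_on with
  | C a => simp
  | add p q hp hq =>
      have : p + q - C (constantCoeff (p + q)) =
          (p - C (constantCoeff p)) + (q - C (constantCoeff q)) := by
        rw [map_add, map_add]; ring
      rw [this]; exact Ideal.add_mem _ hp hq
  | mul_X p i hp =>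
      have h0 : constantCoeff (p * X i) = 0 := by
        rw [map_mul, constantCoeff_X, mul_zero]
      rw [h0, map_zero, sub_zero]
      refine Ideal.mul_mem_left _ p (Ideal.subset_span ?_)
      fin_cases i <;> simp

lemma mA_eq_ker : mA = RingHom.ker εA := by
  apply le_antisymm
  · rw [mA, Ideal.span_le]
    rintro z hz
    simp only [Set.mem_insert_iff, Set.mem_singleton_iff] at hz
    rcases hz with rfl | rfl <;>
      simp [RingHom.mem_ker, xA, yA, εA, evalO, Ideal.Quotient.lift_mk]
  · intro z hz
    obtain ⟨p, rfl⟩ := Ideal.Quotient.mk_surjective z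
    have hev : constantCoeff p = 0 := by
      have : εA (Ideal.Quotient.mk nodeIdeal p) = evalO p := rfl
      rw [RingHom.mem_ker, this] at hz
      simpa [evalO] using hz
    have hp : p ∈ (Ideal.span {(X 0 : Pc), X 1}) := by
      have := sub_const_mem p
      rwa [hev, map_zero, sub_zero] at this
    have : Ideal.Quotient.mk nodeIdeal p ∈
        Ideal.map (Ideal.Quotient.mk nodeIdeal) (Ideal.span {(X 0 : Pc), X 1}) :=
      Ideal.mem_map_of_mem _ hp
    rwa [Ideal.map_span, Set.image_insert_eq, Set.image_singleton] at this

instance : mA.IsPrime := mA_eq_ker ▸ RingHom.ker_isPrime εA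

/-- `R`, the localization of `ℂ[x,y]/(xy)` at the maximal ideal `(x,y)`. -/
abbrev Rnode : Type := Localization.AtPrime mA

/-- The element `x` of `R`. -/
def x : Rnode := algebraMap Anode Rnode xA

/-- The element `y` of `R`. -/
def y : Rnode := algebraMap Anode Rnode yA

instance : Algebra ℂ Rnode :=
  ((algebraMap Anode Rnode).comp (algebraMap ℂ Anode)).toAlgebra

instance (I : Ideal Rnode) : Algebra ℂ (Rnode ⧸ I) := Ideal.Quotient.algebra ℂ

lemma pow_mem_aux {R : Type*} [CommRing R] [IsLocalRing R] [Module ℂ R]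
    (I : Ideal R) [Module ℂ (R ⧸ I)]
    (hmk : ∀ (c : ℂ) (r : R), Ideal.Quotient.mk I (c • r) = c • Ideal.Quotient.mk I r)
    (hcomp : ∀ (c : ℂ) (r : R), c • r = (c • (1:R)) * r)
    (hone : ∀ c : ℂ, c ≠ 0 → IsUnit (c • (1:R)))
    (m : ℕ) (hm : 1 ≤ m)
    (hI : Module.finrank ℂ (R ⧸ I) = m) (z : R)
    (hz : z ∈ IsLocalRing.maximalIdeal R) : z ^ m ∈ I := by
  classical
  have hfd : FiniteDimensional ℂ (R ⧸ I) := FiniteDimensional.of_finrank_pos (by omega)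
  have hnotli : ¬ LinearIndependent ℂ (fun i : Fin (m+1) => Ideal.Quotient.mk I (z ^ (i:ℕ))) := by
    intro h
    have := h.fintype_card_le_finrank
    simp [hI] at this
  obtain ⟨g, hsum, i0, hgi0⟩ := Fintype.not_linearIndependent_iff.mp hnotli
  have hS : (∑ i : Fin (m+1), g i • z ^ (i:ℕ)) ∈ I := by
    rw [← Ideal.Quotient.eq_zero_iff_mem, map_sum]
    simp only [hmk]
    exact hsum
  set T : Finset (Fin (m+1)) := Finset.univ.filter (fun i => g i ≠ 0) with hT
  have hTne : T.Nonempty := ⟨i0, by simp [hT, hgi0]⟩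
  set k := T.min' hTne with hkdef
  have hk : g k ≠ 0 := (Finset.mem_filter.mp (T.min'_mem hTne)).2
  have hkmin : ∀ i ∈ T, k ≤ i := fun i hi => T.min'_le i hi
  have hsum' : (∑ i ∈ T, g i • z ^ (i:ℕ)) = ∑ i : Fin (m+1), g i • z ^ (i:ℕ) := by
    apply Finset.sum_filter_of_ne
    intro i _ hne hg
    exact hne (by rw [hg, zero_smul])
  set V := ∑ i ∈ T, g i • z ^ ((i:ℕ) - (k:ℕ)) with hV
  have hfac : z ^ (k:ℕ) * V = ∑ i ∈ T, g i • z ^ (i:ℕ) := by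
    rw [hV, Finset.mul_sum]
    apply Finset.sum_congr rfl
    intro i hi
    have hki : (k:ℕ) ≤ (i:ℕ) := hkmin i hi
    rw [hcomp (g i) (z ^ ((i:ℕ) - (k:ℕ))), hcomp (g i) (z ^ (i:ℕ)), ← mul_assoc,
      mul_comm (z ^ (k:ℕ)) (g i • (1:R)), mul_assoc, ← pow_add, Nat.add_sub_cancel' hki]
  have hrest : (∑ i ∈ T.erase k, g i • z ^ ((i:ℕ) - (k:ℕ))) ∈ IsLocalRing.maximalIdeal R := by
    apply Ideal.sum_mem
    intro i hi
    have hik : k < i := lt_of_le_of_ne (hkmin i (Finset.mem_of_mem_erase hi))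
      (Ne.symm (Finset.ne_of_mem_erase hi))
    have h1 : 0 < (i:ℕ) - (k:ℕ) := by
      have : (k:ℕ) < (i:ℕ) := hik
      omega
    rw [hcomp]
    exact Ideal.mul_mem_left _ _ (Ideal.pow_mem_of_mem _ hz _ h1)
  have hVsplit : V = g k • z ^ ((k:ℕ) - (k:ℕ)) + ∑ i ∈ T.erase k, g i • z ^ ((i:ℕ) - (k:ℕ)) :=
    (Finset.add_sum_erase T _ (T.min'_mem hTne)).symm
  have hunit : IsUnit V := by
    by_contra hnu
    have hVm : V ∈ IsLocalRing.maximalIdeal R := (IsLocalRing.mem_maximalIdeal V).mpr hnu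
    have hmem : g k • (1:R) ∈ IsLocalRing.maximalIdeal R := by
      have := Ideal.sub_mem _ hVm hrest
      rw [hVsplit] at this
      simpa using this
    have hu : IsUnit (g k • (1:R)) := hone (g k) hk
    exact (IsLocalRing.maximalIdeal.isMaximal R).ne_top (Ideal.eq_top_of_isUnit_mem _ hmem hu)
  obtain ⟨v, hv⟩ := hunit.exists_right_inv
  have hzk : z ^ (k:ℕ) ∈ I := by
    have hin : z ^ (k:ℕ) * V ∈ I := by rw [hfac, hsum']; exact hS
    have h2 : z ^ (k:ℕ) = (z ^ (k:ℕ) * V) * v := by rw [mul_assoc, hv, mul_one]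
    rw [h2]; exact I.mul_mem_right v hin
  have hkm : (k:ℕ) ≤ m := by omega
  have hsplit : z ^ m = z ^ (k:ℕ) * z ^ (m - (k:ℕ)) := by
    rw [← pow_add, Nat.add_sub_cancel' hkm]
  rw [hsplit]
  exact I.mul_mem_right _ hzk

set_option synthInstance.maxHeartbeats 1000000 in
set_option maxHeartbeats 2000000 in
theorem pow_mem_of_colength (m : ℕ) (hm : 1 ≤ m) (I : Ideal Rnode)
    (hI : Module.finrank ℂ (Rnode ⧸ I) = m) :
    x ^ m ∈ I ∧ y ^ m ∈ I := by
  constructor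
  · exact pow_mem_aux I (fun c r => by rfl)
      (fun c r => by rw [smul_mul_assoc, one_mul])
      (fun c hc => IsUnit.of_mul_eq_one (c⁻¹ • 1)
        (by rw [smul_mul_assoc, one_mul, smul_smul, mul_inv_cancel₀ hc, one_smul]))
      m hm hI x
      ((IsLocalization.AtPrime.to_map_mem_maximal_iff Rnode mA xA).mpr
        (Ideal.subset_span (Set.mem_insert _ _)))
  · exact pow_mem_aux I (fun c r => by rfl)
      (fun c r => by rw [smul_mul_assoc, one_mul])
      (fun c hc => IsUnit.of_mul_eq_one (c⁻¹ • 1)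
        (by rw [smul_mul_assoc, one_mul, smul_smul, mul_inv_cancel₀ hc, one_smul]))
      m hm hI y
      ((IsLocalization.AtPrime.to_map_mem_maximal_iff Rnode mA yA).mpr
        (Ideal.subset_span (Set.mem_insert_of_mem _ rfl)))

end
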